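/- Let (I,J,K) be a hypercomplex structure on E and let ∇ be defined by ∇_U V = −(1/2)·K(JV∘IU − J(V∘IU) − I(JV∘U) + JI(V∘U)), extended ℂ-bilinearly to E_ℂ. Then for all ξ, η, ζ ∈ L*_J: ∇_ξ η ∈ L*_J and Ω(∇_ξ η, ζ) = ρ(η)Ω(ξ,ζ) − Ω(η∘ξ, ζ) − Ω(ξ, η∘ζ). -/
import Mathlib


open scoped TensorProduct
section BC

variable {M N P : Type} [AddCommGroup M] [Module ℝ M] [AddCommGroup N] [Module ℝ N]
  [AddCommGroup P] [Module ℝ P]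

/-- Complex-bilinear extension of an `ℝ`-bilinear map to the complexifications. -/
noncomputable def bcBilin (B : M →ₗ[ℝ] N →ₗ[ℝ] P) :
    ℂ ⊗[ℝ] M →ₗ[ℂ] ℂ ⊗[ℝ] N →ₗ[ℂ] ℂ ⊗[ℝ] P :=
  LinearMap.liftBaseChange ℂ ((LinearMap.baseChangeHom ℝ ℂ N P) ∘ₗ B)

/-- Complex conjugation on the complexification `ℂ ⊗[ℝ] M`. -/
noncomputable def conjT (M : Type) [AddCommGroup M] [Module ℝ M] :
    ℂ ⊗[ℝ] M →ₗ[ℝ] ℂ ⊗[ℝ] M :=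
  TensorProduct.map Complex.conjAe.toLinearMap LinearMap.id

/-- The `i`-eigenspace of a `ℂ`-linear endomorphism of `ℂ ⊗[ℝ] M`. -/
def eigP (Jc : ℂ ⊗[ℝ] M →ₗ[ℂ] ℂ ⊗[ℝ] M) : Set (ℂ ⊗[ℝ] M) :=
  {e | Jc e = Complex.I • e}

/-- The `-i`-eigenspace of a `ℂ`-linear endomorphism of `ℂ ⊗[ℝ] M`. -/
def eigM (Jc : ℂ ⊗[ℝ] M →ₗ[ℂ] ℂ ⊗[ℝ] M) : Set (ℂ ⊗[ℝ] M) :=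
  {e | Jc e = -(Complex.I • e)}

end BC

/-- An (algebraic) Courant algebroid: a commutative `ℝ`-algebra `A`, an `A`-module `E`,
a nondegenerate symmetric `A`-bilinear pairing, an anchor with values in `ℝ`-linear
derivations of `A`, a map `Dm : A → E`, and an `ℝ`-bilinear Dorfman bracket. -/
structure CourantAlgebroid (A E : Type) [CommRing A] [Algebra ℝ A]
    [AddCommGroup E] [Module ℝ E] [Module A E] [IsScalarTower ℝ A E] : Type where
  pair : E →ₗ[A] E →ₗ[A] A
  pair_symm : ∀ x y, pair x y = pair y x
  pair_nondeg : ∀ x, (∀ y, pair x y = 0) → x = 0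
  anchor : E →ₗ[A] Derivation ℝ A A
  Dm : A →ₗ[ℝ] E
  pair_Dm : ∀ (f : A) (x : E), pair (Dm f) x = (1/2 : ℝ) • anchor x f
  brac : E →ₗ[ℝ] E →ₗ[ℝ] E
  brac_leibniz : ∀ x y z, brac x (brac y z) = brac (brac x y) z + brac y (brac x z)
  anchor_brac : ∀ (x y : E) (f : A),
    anchor (brac x y) f = anchor x (anchor y f) - anchor y (anchor x f)
  brac_smul : ∀ (f : A) (x y : E), brac x (f • y) = anchor x f • y + f • brac x y
  brac_add_swap : ∀ x y, brac x y + brac y x = (2 : ℝ) • Dm (pair x y)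
  Dm_brac : ∀ (f : A) (x : E), brac (Dm f) x = 0
  anchor_pair : ∀ x y z, anchor x (pair y z) = pair (brac x y) z + pair y (brac x z)

namespace CourantAlgebroid

variable {A E : Type} [CommRing A] [Algebra ℝ A]
    [AddCommGroup E] [Module ℝ E] [Module A E] [IsScalarTower ℝ A E]

/-- The Nijenhuis concomitant of two operators with respect to a bracket. -/
def nijGen {M : Type*} [AddCommGroup M] (br : M → M → M) (F G : M → M) (U V : M) : M :=
  br (F U) (G V) - F (br U (G V)) - G (br (F U) V) + F (G (br U V))
    + br (G U) (F V) - G (br U (F V)) - F (br (G U) V) + G (F (br U V))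

/-- The Nijenhuis concomitant `N(F,G)` of two `A`-linear endomorphisms of `E`. -/
def nij (C : CourantAlgebroid A E) (F G : E →ₗ[A] E) (U V : E) : E :=
  nijGen (fun x y => C.brac x y) (fun e => F e) (fun e => G e) U V

/-- An almost complex structure: an orthogonal endomorphism squaring to `-1`. -/
def IsAlmostComplexStr (C : CourantAlgebroid A E) (J : E →ₗ[A] E) : Prop :=
  (∀ e, J (J e) = -e) ∧ ∀ x y, C.pair (J x) (J y) = C.pair x y

/-- A complex structure: an almost complex structure with vanishing Nijenhuis concomitant. -/
def IsComplexStr (C : CourantAlgebroid A E) (J : E →ₗ[A] E) : Prop :=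
  C.IsAlmostComplexStr J ∧ ∀ U V, C.nij J J U V = 0

/-- An almost hypercomplex structure: a triple of almost complex structures
satisfying the quaternionic relations. -/
def IsAlmostHypercomplex (C : CourantAlgebroid A E) (I J K : E →ₗ[A] E) : Prop :=
  C.IsAlmostComplexStr I ∧ C.IsAlmostComplexStr J ∧ C.IsAlmostComplexStr K ∧
    ∀ e, I (J (K e)) = -e

/-- A hypercomplex structure: an almost hypercomplex structure all of whose six
Nijenhuis concomitants vanish. -/
def IsHypercomplex (C : CourantAlgebroid A E) (I J K : E →ₗ[A] E) : Prop :=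
  C.IsAlmostHypercomplex I J K ∧
    (∀ U V, C.nij I I U V = 0) ∧ (∀ U V, C.nij I J U V = 0) ∧ (∀ U V, C.nij I K U V = 0) ∧
    (∀ U V, C.nij J J U V = 0) ∧ (∀ U V, C.nij J K U V = 0) ∧ (∀ U V, C.nij K K U V = 0)

/-- The Poisson-type bracket on `A` induced by a skew-symmetric endomorphism `F`. -/
def pb (C : CourantAlgebroid A E) (F : E →ₗ[A] E) (f g : A) : A :=
  C.pair (F (C.Dm f)) (C.Dm g)

/-- `Δ_f(U,V)` associated with an almost hypercomplex triple. -/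
def Delta (C : CourantAlgebroid A E) (I J K : E →ₗ[A] E) (f : A) (U V : E) : E :=
  C.pair U V • C.Dm f + C.pair (I U) V • I (C.Dm f) + C.pair (J U) V • J (C.Dm f)
    + C.pair (K U) V • K (C.Dm f)

/-- A hypercomplex connection relative to an almost hypercomplex triple. -/
def IsHConn (C : CourantAlgebroid A E) (I J K : E →ₗ[A] E)
    (conn : E →ₗ[ℝ] E →ₗ[ℝ] E) : Prop :=
  (∀ (f : A) (U V : E), conn (f • U) V = f • conn U V) ∧
  (∀ (f : A) (U V : E),
    conn U (f • V) = C.anchor U f • V + f • conn U V - C.Delta I J K f U V)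

/-- The torsion of an `ℝ`-bilinear connection. -/
noncomputable def torsion (C : CourantAlgebroid A E) (conn : E →ₗ[ℝ] E →ₗ[ℝ] E) (U V : E) : E :=
  conn U V - conn V U - (1/2 : ℝ) • (C.brac U V - C.brac V U)

/-- The canonical hypercomplex connection. -/
noncomputable def hconn (C : CourantAlgebroid A E) (I J K : E →ₗ[A] E) (U V : E) : E :=
  -((1/2 : ℝ) • K (C.brac (J V) (I U) - J (C.brac V (I U)) - I (C.brac (J V) U)
      + J (I (C.brac V U))))

/-- The pairing as an `ℝ`-bilinear map. -/
noncomputable def pairR (C : CourantAlgebroid A E) : E →ₗ[ℝ] E →ₗ[ℝ] A :=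
  LinearMap.mk₂ ℝ (fun x y => C.pair x y)
    (fun x x' y => by simp)
    (fun r x y => by
      show C.pair (r • x) y = r • C.pair x y
      rw [← algebraMap_smul A r x, map_smul, LinearMap.smul_apply, algebraMap_smul])
    (fun x y y' => by simp)
    (fun r x y => by
      show C.pair x (r • y) = r • C.pair x y
      rw [← algebraMap_smul A r y, map_smul, algebraMap_smul])

/-- The anchor as an `ℝ`-bilinear map `E → A → A`. -/
noncomputable def rhoR (C : CourantAlgebroid A E) : E →ₗ[ℝ] A →ₗ[ℝ] A :=
  LinearMap.mk₂ ℝ (fun x f => C.anchor x f)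
    (fun x x' f => by simp)
    (fun r x f => by
      show C.anchor (r • x) f = r • C.anchor x f
      rw [← algebraMap_smul A r x, map_smul, Derivation.smul_apply, algebraMap_smul])
    (fun x f f' => by simp)
    (fun r x f => by simp)

/-- The `A`-module structure on `E` as an `ℝ`-bilinear map. -/
noncomputable def smulR (A E : Type) [CommRing A] [Algebra ℝ A]
    [AddCommGroup E] [Module ℝ E] [Module A E] [IsScalarTower ℝ A E] :
    A →ₗ[ℝ] E →ₗ[ℝ] E :=
  LinearMap.mk₂ ℝ (fun a e => a • e)
    (fun a a' e => add_smul a a' e)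
    (fun r a e => smul_assoc r a e)
    (fun a e e' => smul_add a e e')
    (fun r a e => smul_comm a r e)

/-- Complex-bilinear extension of the pairing. -/
noncomputable def pairC (C : CourantAlgebroid A E) :
    ℂ ⊗[ℝ] E →ₗ[ℂ] ℂ ⊗[ℝ] E →ₗ[ℂ] ℂ ⊗[ℝ] A := bcBilin C.pairR

/-- Complex-bilinear extension of the Dorfman bracket. -/
noncomputable def bracC (C : CourantAlgebroid A E) :
    ℂ ⊗[ℝ] E →ₗ[ℂ] ℂ ⊗[ℝ] E →ₗ[ℂ] ℂ ⊗[ℝ] E := bcBilin C.brac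

/-- Complex-bilinear extension of the anchor. -/
noncomputable def rhoC (C : CourantAlgebroid A E) :
    ℂ ⊗[ℝ] E →ₗ[ℂ] ℂ ⊗[ℝ] A →ₗ[ℂ] ℂ ⊗[ℝ] A := bcBilin C.rhoR

/-- Complex-bilinear extension of the `A`-action on `E`. -/
noncomputable def smulC (C : CourantAlgebroid A E) :
    ℂ ⊗[ℝ] A →ₗ[ℂ] ℂ ⊗[ℝ] E →ₗ[ℂ] ℂ ⊗[ℝ] E := bcBilin (smulR A E)

/-- The `ℂ`-linear extension of an `A`-linear endomorphism of `E` to `ℂ ⊗[ℝ] E`. -/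
noncomputable def cext (F : E →ₗ[A] E) : ℂ ⊗[ℝ] E →ₗ[ℂ] ℂ ⊗[ℝ] E :=
  (F.restrictScalars ℝ).baseChange ℂ

/-- `Ω^♯ = (1/2)(I + iK)` associated with an (almost) hypercomplex triple. -/
noncomputable def OmS (I K : E →ₗ[A] E) : ℂ ⊗[ℝ] E →ₗ[ℂ] ℂ ⊗[ℝ] E :=
  (1/2 : ℂ) • (cext I + Complex.I • cext K)

/-- `Ω̄^♯ = (1/2)(I - iK)` associated with an (almost) hypercomplex triple. -/
noncomputable def ObS (I K : E →ₗ[A] E) : ℂ ⊗[ℝ] E →ₗ[ℂ] ℂ ⊗[ℝ] E :=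
  (1/2 : ℂ) • (cext I - Complex.I • cext K)

/-- `Ω(ξ,η) = ⟨Ω^♯ξ, η⟩`. -/
noncomputable def Omf (C : CourantAlgebroid A E) (I K : E →ₗ[A] E)
    (x y : ℂ ⊗[ℝ] E) : ℂ ⊗[ℝ] A :=
  C.pairC (OmS I K x) y

/-- The complexified hypercomplex connection on `ℂ ⊗[ℝ] E`. -/
noncomputable def hconnC (C : CourantAlgebroid A E) (I J K : E →ₗ[A] E)
    (U V : ℂ ⊗[ℝ] E) : ℂ ⊗[ℝ] E :=
  -((1/2 : ℂ) • cext K (C.bracC (cext J V) (cext I U) - cext J (C.bracC V (cext I U))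
      - cext I (C.bracC (cext J V) U) + cext J (cext I (C.bracC V U))))

end CourantAlgebroid

open CourantAlgebroid

section Helpers

open TensorProduct

variable {M N P : Type} [AddCommGroup M] [Module ℝ M] [AddCommGroup N] [Module ℝ N]
  [AddCommGroup P] [Module ℝ P]

lemma bcBilin_tmul (B : M →ₗ[ℝ] N →ₗ[ℝ] P) (z w : ℂ) (m : M) (n : N) :
    bcBilin B (z ⊗ₜ m) (w ⊗ₜ n) = (z * w) ⊗ₜ B m n := by
  simp [bcBilin, LinearMap.liftBaseChange_tmul, TensorProduct.smul_tmul', smul_eq_mul]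

variable {A E : Type} [CommRing A] [Algebra ℝ A] [AddCommGroup E] [Module ℝ E]
    [Module A E] [IsScalarTower ℝ A E]

lemma cext_tmul (F : E →ₗ[A] E) (z : ℂ) (e : E) :
    cext F (z ⊗ₜ e) = z ⊗ₜ F e := rfl

lemma cext_comp_apply {F G H : E →ₗ[A] E} (h : ∀ e, F (G e) = H e) (x : ℂ ⊗[ℝ] E) :
    cext F (cext G x) = cext H x := by
  induction x using TensorProduct.induction_on with
  | zero => simp
  | tmul z e => rw [cext_tmul, cext_tmul, cext_tmul, h]
  | add a b ha hb => simp only [map_add, ha, hb]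

lemma cext_comp_neg_apply {F G H : E →ₗ[A] E} (h : ∀ e, F (G e) = -(H e)) (x : ℂ ⊗[ℝ] E) :
    cext F (cext G x) = -(cext H x) := by
  induction x using TensorProduct.induction_on with
  | zero => simp
  | tmul z e => rw [cext_tmul, cext_tmul, cext_tmul, h, TensorProduct.tmul_neg]
  | add a b ha hb => simp only [map_add, ha, hb]; abel

lemma cext_sq_apply {F G : E →ₗ[A] E} (h : ∀ e, F (G e) = -e) (x : ℂ ⊗[ℝ] E) :
    cext F (cext G x) = -x := by
  induction x using TensorProduct.induction_on with
  | zero => simp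
  | tmul z e => rw [cext_tmul, cext_tmul, h, TensorProduct.tmul_neg]
  | add a b ha hb => simp only [map_add, ha, hb]; abel

lemma pairC_tmul (C : CourantAlgebroid A E) (z w : ℂ) (e f : E) :
    C.pairC (z ⊗ₜ e) (w ⊗ₜ f) = (z * w) ⊗ₜ C.pair e f := by
  rw [pairC, bcBilin_tmul]
  rfl

lemma pairC_orth (C : CourantAlgebroid A E) (F : E →ₗ[A] E)
    (hF : ∀ x y, C.pair (F x) (F y) = C.pair x y) (x y : ℂ ⊗[ℝ] E) :
    C.pairC (cext F x) (cext F y) = C.pairC x y := by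
  induction x using TensorProduct.induction_on with
  | zero => simp
  | add a b ha hb => simp only [map_add, LinearMap.add_apply, ha, hb]
  | tmul z e =>
    induction y using TensorProduct.induction_on with
    | zero => simp
    | add a b ha hb => simp only [map_add, ha, hb]
    | tmul w f => rw [cext_tmul, cext_tmul, pairC_tmul, pairC_tmul, hF]

lemma rhoC_pairC (C : CourantAlgebroid A E) (x y z : ℂ ⊗[ℝ] E) :
    C.rhoC x (C.pairC y z) = C.pairC (C.bracC x y) z + C.pairC y (C.bracC x z) := by
  induction x using TensorProduct.induction_on with
  | zero => simp
  | add a b ha hb =>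
    simp only [map_add, LinearMap.add_apply, ha, hb]
    abel
  | tmul zx ex =>
    induction y using TensorProduct.induction_on with
    | zero => simp
    | add a b ha hb =>
      simp only [map_add, LinearMap.add_apply, ha, hb]
      abel
    | tmul zy ey =>
      induction z using TensorProduct.induction_on with
      | zero => simp
      | add a b ha hb =>
        simp only [map_add, ha, hb]
        abel
      | tmul zz ez =>
        have h1 : C.bracC (zx ⊗ₜ ex) (zy ⊗ₜ ey) = (zx * zy) ⊗ₜ C.brac ex ey := by
          rw [bracC, bcBilin_tmul]
        have h2 : C.bracC (zx ⊗ₜ ex) (zz ⊗ₜ ez) = (zx * zz) ⊗ₜ C.brac ex ez := by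
          rw [bracC, bcBilin_tmul]
        have h3 : C.rhoC (zx ⊗ₜ ex) ((zy * zz) ⊗ₜ C.pair ey ez)
            = (zx * (zy * zz)) ⊗ₜ (C.anchor ex (C.pair ey ez)) := by
          rw [rhoC, bcBilin_tmul]
          rfl
        rw [pairC_tmul, h1, h2, h3, pairC_tmul, pairC_tmul, C.anchor_pair,
          TensorProduct.tmul_add]
        congr 2
        · ring
        · ring

lemma half_smul_trick {M : Type*} [AddCommGroup M] [Module ℂ M] (x : M) :
    (1/2 : ℂ) • x - ((1/2 : ℂ) * Complex.I) • (Complex.I • x) = x := by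
  rw [smul_smul, mul_assoc, Complex.I_mul_I, mul_neg_one, neg_smul, sub_neg_eq_add,
    ← add_smul]
  norm_num

end Helpers

theorem stmt17 {A E : Type} [CommRing A] [Algebra ℝ A] [AddCommGroup E] [Module ℝ E]
    [Module A E] [IsScalarTower ℝ A E] (C : CourantAlgebroid A E) (I J K : E →ₗ[A] E)
    (h : C.IsHypercomplex I J K) :
    ∀ ξ η ζ : ℂ ⊗[ℝ] E, ξ ∈ eigM (cext J) → η ∈ eigM (cext J) → ζ ∈ eigM (cext J) →
      C.hconnC I J K ξ η ∈ eigM (cext (A := A) (E := E) J) ∧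
      C.Omf I K (C.hconnC I J K ξ η) ζ =
        C.rhoC η (C.Omf I K ξ ζ) - C.Omf I K (C.bracC η ξ) ζ
          - C.Omf I K ξ (C.bracC η ζ) := by
  obtain ⟨⟨hI, hJ, hK, hIJK⟩, -⟩ := h
  have hII : ∀ e, I (I e) = -e := hI.1
  have hJJ : ∀ e, J (J e) = -e := hJ.1
  have hKK : ∀ e, K (K e) = -e := hK.1
  have hIJ : ∀ e, I (J e) = K e := by
    intro e
    have h1 : K (-(K e)) = e := by rw [map_neg, hKK, neg_neg]
    calc I (J e) = I (J (K (-(K e)))) := by rw [h1]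
      _ = -(-(K e)) := hIJK _
      _ = K e := neg_neg _
  have hJK : ∀ e, J (K e) = I e := by
    intro e
    have h2 := congrArg I (hIJK e)
    rw [hII, map_neg] at h2
    exact neg_inj.mp h2
  have hKJ : ∀ e, K (J e) = -(I e) := fun e => by rw [← hIJ (J e), hJJ, map_neg]
  have hIK : ∀ e, I (K e) = -(J e) := fun e => by rw [← hIJ e, hII]
  -- complexified operator identities
  have cJJ : ∀ x : ℂ ⊗[ℝ] E, cext (A := A) J (cext J x) = -x := cext_sq_apply hJJ
  have cII : ∀ x : ℂ ⊗[ℝ] E, cext (A := A) I (cext I x) = -x := cext_sq_apply hII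
  have cKK : ∀ x : ℂ ⊗[ℝ] E, cext (A := A) K (cext K x) = -x := cext_sq_apply hKK
  have cIJ : ∀ x : ℂ ⊗[ℝ] E, cext (A := A) I (cext J x) = cext K x := cext_comp_apply hIJ
  have cJK : ∀ x : ℂ ⊗[ℝ] E, cext (A := A) J (cext K x) = cext I x := cext_comp_apply hJK
  have cKJ : ∀ x : ℂ ⊗[ℝ] E, cext (A := A) K (cext J x) = -(cext I x) :=
    cext_comp_neg_apply hKJ
  have cIK : ∀ x : ℂ ⊗[ℝ] E, cext (A := A) I (cext K x) = -(cext J x) :=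
    cext_comp_neg_apply hIK
  intro ξ η ζ hξ hη hζ
  replace hξ : cext (A := A) J ξ = -(Complex.I • ξ) := hξ
  replace hη : cext (A := A) J η = -(Complex.I • η) := hη
  replace hζ : cext (A := A) J ζ = -(Complex.I • ζ) := hζ
  have hII' : Complex.I * Complex.I = -1 := Complex.I_mul_I
  set a := C.bracC η (cext (A := A) I ξ) with ha
  set b := C.bracC η ξ with hb
  set w := a - cext (A := A) I b with hw
  have key : C.hconnC I J K ξ η
      = (1/2 : ℂ) • cext K (Complex.I • w + cext (A := A) J w) := by
    rw [CourantAlgebroid.hconnC, hη, hw, ha, hb]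
    simp only [map_neg, map_smul, map_add, map_sub, LinearMap.neg_apply,
      LinearMap.smul_apply]
    module
  have pJ : ∀ x : ℂ ⊗[ℝ] E, C.pairC (cext (A := A) J x) ζ = Complex.I • C.pairC x ζ := by
    intro x
    have h0 := pairC_orth C J hJ.2 (cext J x) ζ
    rw [cJJ, hζ, map_neg, map_neg, LinearMap.neg_apply, map_smul, neg_neg] at h0
    rw [← h0]
  have hKζ : cext (A := A) K ζ = -(Complex.I • cext I ζ) := by
    rw [← cIJ ζ, hζ, map_neg, map_smul]
  have hKξ : cext (A := A) K ξ = -(Complex.I • cext I ξ) := by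
    rw [← cIJ ξ, hξ, map_neg, map_smul]
  have pIb : C.pairC (cext (A := A) I b) ζ = -(C.pairC b (cext I ζ)) := by
    have h0 := pairC_orth C I hI.2 (cext I b) ζ
    rw [cII, map_neg, LinearMap.neg_apply] at h0
    rw [← h0]
  have pKb : C.pairC (cext (A := A) K b) ζ = Complex.I • C.pairC b (cext I ζ) := by
    have h0 := pairC_orth C K hK.2 (cext K b) ζ
    rw [cKK, hKζ] at h0
    rw [← h0]
    simp
  have hOmξ : OmS I K ξ = cext (A := A) I ξ := by
    rw [OmS, LinearMap.smul_apply, LinearMap.add_apply, LinearMap.smul_apply, hKξ,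
      smul_neg, smul_smul, hII', neg_one_smul, neg_neg]
    module
  have hOmb : C.Omf I K b ζ = C.pairC (cext (A := A) I b) ζ := by
    rw [CourantAlgebroid.Omf, OmS, LinearMap.smul_apply, LinearMap.add_apply,
      LinearMap.smul_apply, map_smul, map_add, map_smul, LinearMap.smul_apply,
      LinearMap.add_apply, LinearMap.smul_apply, pKb, pIb, smul_smul, hII',
      neg_one_smul]
    module
  have hJI : ∀ e, J (I e) = -(K e) := fun e => by rw [← hJK e, hJJ]
  have hKI : ∀ e, K (I e) = J e := fun e => by rw [← hJK e, hKJ, hIK, neg_neg]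
  have cJI : ∀ x : ℂ ⊗[ℝ] E, cext (A := A) J (cext I x) = -(cext K x) :=
    cext_comp_neg_apply hJI
  have cKI : ∀ x : ℂ ⊗[ℝ] E, cext (A := A) K (cext I x) = cext J x := cext_comp_apply hKI
  constructor
  · show cext (A := A) (E := E) J (C.hconnC I J K ξ η)
      = -(Complex.I • C.hconnC I J K ξ η)
    rw [key]
    simp only [map_smul, map_add, map_neg, cJK, cIJ, cKJ, cJI, cKI, cII, cJJ, cKK,
      smul_neg, smul_add, smul_smul, hII', neg_one_smul, neg_neg]
    match_scalars <;> first
    | ring1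
    | (ring_nf; simp [Complex.I_sq]; try ring)
  · have hOmw : OmS I K ((1/2 : ℂ) • cext (A := A) K (Complex.I • w + cext J w))
        = (1/2 : ℂ) • w - ((1/2 : ℂ) * Complex.I) • cext (A := A) J w := by
      rw [OmS, LinearMap.smul_apply, LinearMap.add_apply, LinearMap.smul_apply]
      simp only [map_smul, map_add, map_neg, cIK, cKJ, cKI, cII, cKK, cIJ, cJK, cJI, cJJ,
        smul_neg, smul_add, smul_sub, smul_smul, hII', neg_one_smul, neg_neg]
      match_scalars <;> first
    | ring1
    | (ring_nf; simp [Complex.I_sq]; try ring)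
    rw [key]
    simp only [CourantAlgebroid.Omf]
    rw [hOmw, hOmξ]
    rw [map_sub, LinearMap.sub_apply, map_smul, map_smul, LinearMap.smul_apply,
      LinearMap.smul_apply, pJ w]
    rw [show C.pairC (OmS I K b) ζ = C.Omf I K b ζ from rfl, hOmb, rhoC_pairC]
    rw [half_smul_trick]
    rw [hw, map_sub, LinearMap.sub_apply]
    abel
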